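/- Let α and β be types and p : α → β → Prop a decidable join predicate. Model bag relations with signed multiplicities as finitely supported functions: for f : α →₀ ℤ and g : β →₀ ℤ, define the inner join J(f, g) : α × β →₀ ℤ by J(f, g)(a, b) = f a * g b if p a b holds, and 0 otherwise. Then for all f, Δf : α →₀ ℤ and g, Δg : β →₀ ℤ: J(f + Δf, g + Δg) = J(f, g) + J(Δf, g) + J(f, Δg) + J(Δf, Δg). -/

import Mathlib

/-- Inner join of two bag relations with signed (integer) multiplicities:
the multiplicity of the pair `(a, b)` is `f a * g b` when the join predicate
`p a b` holds, and `0` otherwise. -/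
noncomputable def innerJoin {α β : Type*} (p : α → β → Prop) [∀ a b, Decidable (p a b)]
    (f : α →₀ ℤ) (g : β →₀ ℤ) : α × β →₀ ℤ :=
  Finsupp.onFinset (f.support ×ˢ g.support)
    (fun ab => if p ab.1 ab.2 then f ab.1 * g ab.2 else 0)
    (fun ab hab => by
      rw [Finset.mem_product]
      simp only [Finsupp.mem_support_iff]
      try dsimp only at hab
      split_ifs at hab with h
      · exact mul_ne_zero_iff.mp hab
      · exact absurd rfl hab)

/-- The delta rule for inner join: the inner join is bilinear over the
multiplicity-adding merge operator `+#`, i.e.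
`(f + Δf) ⋈ (g + Δg) = f ⋈ g + Δf ⋈ g + f ⋈ Δg + Δf ⋈ Δg`. -/
theorem innerJoin_add_add {α β : Type*} (p : α → β → Prop) [∀ a b, Decidable (p a b)]
    (f Δf : α →₀ ℤ) (g Δg : β →₀ ℤ) :
    innerJoin p (f + Δf) (g + Δg) =
      innerJoin p f g + innerJoin p Δf g + innerJoin p f Δg + innerJoin p Δf Δg := by
  ext ab
  simp [innerJoin, Finsupp.onFinset_apply]
  split_ifs with h <;> ring
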